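/- Let f : [0,∞) → ℝ be continuous and integrable, let ϑ > 0, and let ω̄ > 0 satisfy ∫_{ω̄}^{∞} |f(ω)| dω ≤ ϑ/2. Let 0 = ω₀ < ⋯ < ω_N = ω̄ be a partition with f L_i-Lipschitz on each [ω_i, ω_{i+1}] and (ω̄/4)·(ω_{i+1} − ω_i)·L_i ≤ ϑ/2 for every i. Let P : [0,∞) → ℝ be the piecewise linear interpolant of f at the nodes ω_i on [0, ω̄], extended by P(ω) = 0 for ω > ω̄. Then |∫_0^{∞} f(ω) dω − ∫_0^{∞} P(ω) dω| ≤ ϑ. -/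

import Mathlib

open Set MeasureTheory

lemma trap_bound (a b L : ℝ) (hab : a ≤ b) (hL : 0 ≤ L) (f : ℝ → ℝ)
    (hf : ContinuousOn f (Icc a b))
    (hLip : ∀ x ∈ Icc a b, ∀ y ∈ Icc a b, |f x - f y| ≤ L * |x - y|) :
    |(∫ t in a..b, f t) - (b - a) * (f a + f b) / 2| ≤ L * (b - a)^2 / 4 := by
  set m := (a + b) / 2 with hm
  have ham : a ≤ m := by rw [hm]; linarith
  have hmb : m ≤ b := by rw [hm]; linarith
  have haab : a ∈ Icc a b := ⟨le_rfl, hab⟩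
  have hbab : b ∈ Icc a b := ⟨hab, le_rfl⟩
  have hIam : Icc a m ⊆ Icc a b := Icc_subset_Icc le_rfl hmb
  have hImb : Icc m b ⊆ Icc a b := Icc_subset_Icc ham le_rfl
  have hint1 : IntervalIntegrable f volume a m :=
    (hf.mono hIam).intervalIntegrable_of_Icc ham
  have hint2 : IntervalIntegrable f volume m b :=
    (hf.mono hImb).intervalIntegrable_of_Icc hmb
  have hsplit : (∫ t in a..b, f t) = (∫ t in a..m, f t) + ∫ t in m..b, f t :=
    (intervalIntegral.integral_add_adjacent_intervals hint1 hint2).symm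
  have hid1 : (∫ t in a..m, (t - a)) = (m - a)^2 / 2 := by
    rw [intervalIntegral.integral_comp_sub_right (fun x => x) a, integral_id]
    ring
  have hid2 : (∫ t in m..b, (b - t)) = (b - m)^2 / 2 := by
    rw [intervalIntegral.integral_sub intervalIntegrable_const
        (continuous_id'.intervalIntegrable m b), intervalIntegral.integral_const, integral_id,
      smul_eq_mul]
    ring
  have b1 : |(∫ t in a..m, f t) - (m - a) * f a| ≤ L * (m - a)^2 / 2 := by
    have e1 : (∫ t in a..m, f t) - (m - a) * f a = ∫ t in a..m, (f t - f a) := by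
      rw [intervalIntegral.integral_sub hint1 intervalIntegrable_const,
        intervalIntegral.integral_const]
      rw [smul_eq_mul]
    rw [e1]
    calc |∫ t in a..m, (f t - f a)| ≤ ∫ t in a..m, |f t - f a| :=
          intervalIntegral.abs_integral_le_integral_abs ham
      _ ≤ ∫ t in a..m, L * (t - a) := by
          apply intervalIntegral.integral_mono_on ham
            ((hint1.sub intervalIntegrable_const).abs)
            (((continuous_const.mul (continuous_id.sub continuous_const)).intervalIntegrable _ _))
          intro x hx
          have := hLip x (hIam hx) a haab
          rwa [abs_of_nonneg (by linarith [hx.1] : (0:ℝ) ≤ x - a)] at this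
      _ = L * (m - a)^2 / 2 := by
          rw [intervalIntegral.integral_const_mul, hid1]; ring
  have b2 : |(∫ t in m..b, f t) - (b - m) * f b| ≤ L * (b - m)^2 / 2 := by
    have e1 : (∫ t in m..b, f t) - (b - m) * f b = ∫ t in m..b, (f t - f b) := by
      rw [intervalIntegral.integral_sub hint2 intervalIntegrable_const,
        intervalIntegral.integral_const]
      rw [smul_eq_mul]
    rw [e1]
    calc |∫ t in m..b, (f t - f b)| ≤ ∫ t in m..b, |f t - f b| :=
          intervalIntegral.abs_integral_le_integral_abs hmb
      _ ≤ ∫ t in m..b, L * (b - t) := by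
          apply intervalIntegral.integral_mono_on hmb
            ((hint2.sub intervalIntegrable_const).abs)
            (((continuous_const.mul (continuous_const.sub continuous_id)).intervalIntegrable _ _))
          intro x hx
          have := hLip x (hImb hx) b hbab
          rwa [abs_of_nonpos (by linarith [hx.2] : x - b ≤ 0), neg_sub] at this
      _ = L * (b - m)^2 / 2 := by
          rw [intervalIntegral.integral_const_mul, hid2]; ring
  have hmeq : (b - a) * (f a + f b) / 2 = (m - a) * f a + (b - m) * f b := by
    rw [hm]; ring
  have key : (∫ t in a..b, f t) - (b - a) * (f a + f b) / 2
      = ((∫ t in a..m, f t) - (m - a) * f a) + ((∫ t in m..b, f t) - (b - m) * f b) := by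
    rw [hsplit, hmeq]; ring
  rw [key]
  calc |_ + _| ≤ _ := abs_add_le _ _
    _ ≤ L * (m - a)^2 / 2 + L * (b - m)^2 / 2 := add_le_add b1 b2
    _ ≤ L * (b - a)^2 / 4 := by
        have : m - a = (b - a) / 2 := by rw [hm]; ring
        have h2 : b - m = (b - a) / 2 := by rw [hm]; ring
        rw [this, h2]; ring_nf; nlinarith [sq_nonneg (b - a)]

theorem stmt_19 (ϑ ωbar : ℝ) (hϑ : 0 < ϑ) (hωbar : 0 < ωbar)
    (f : ℝ → ℝ) (hf : ContinuousOn f (Ici 0))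
    (hint : IntegrableOn f (Ici 0))
    (htail : (∫ t in Ici ωbar, |f t|) ≤ ϑ / 2)
    (N : ℕ) (hN : 0 < N) (ω : ℕ → ℝ) (L : ℕ → ℝ) (hL : ∀ i, 0 ≤ L i)
    (hω0 : ω 0 = 0) (hωN : ω N = ωbar)
    (hmono : ∀ i < N, ω i < ω (i + 1))
    (hLip : ∀ i < N, ∀ x ∈ Icc (ω i) (ω (i + 1)), ∀ y ∈ Icc (ω i) (ω (i + 1)),
      |f x - f y| ≤ L i * |x - y|)
    (hstep : ∀ i < N, ωbar / 4 * (ω (i + 1) - ω i) * L i ≤ ϑ / 2)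
    (P : ℝ → ℝ)
    (hP : ∀ i < N, ∀ t ∈ Icc (ω i) (ω (i + 1)),
      P t = f (ω i) + (t - ω i) / (ω (i + 1) - ω i) * (f (ω (i + 1)) - f (ω i)))
    (hP0 : ∀ t : ℝ, ωbar < t → P t = 0) :
    |(∫ t in Ici (0:ℝ), f t) - ∫ t in Ici (0:ℝ), P t| ≤ ϑ := by
  -- monotonicity
  have mono : ∀ i j, i ≤ j → j ≤ N → ω i ≤ ω j := by
    intro i j hij hjN
    induction j, hij using Nat.le_induction with
    | base => exact le_rfl
    | succ j hij ih => exact le_trans (ih (by omega)) (hmono j (by omega)).le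
  have hnn : ∀ i ≤ N, 0 ≤ ω i := fun i hi => hω0 ▸ mono 0 i (Nat.zero_le _) hi
  have hub : ∀ i ≤ N, ω i ≤ ωbar := fun i hi => hωN ▸ mono i N hi le_rfl
  -- subinterval subsets
  have hsub : ∀ i < N, Icc (ω i) (ω (i + 1)) ⊆ Ici (0:ℝ) := by
    intro i hi t ht
    exact le_trans (hnn i hi.le) ht.1
  -- interval integrability of f on each subinterval
  have hfi : ∀ i < N, IntervalIntegrable f volume (ω i) (ω (i + 1)) := by
    intro i hi
    exact (hf.mono (hsub i hi)).intervalIntegrable_of_Icc (hmono i hi).le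
  -- P equals an affine map on each subinterval; compute its integral
  have hPval : ∀ i < N, (∫ t in (ω i)..(ω (i + 1)), P t)
      = (ω (i + 1) - ω i) * (f (ω i) + f (ω (i + 1))) / 2 := by
    intro i hi
    have hab := (hmono i hi).le
    have hΔ : (0:ℝ) < ω (i + 1) - ω i := by linarith [hmono i hi]
    have heq : EqOn P (fun t => f (ω i) + (t - ω i) * ((f (ω (i + 1)) - f (ω i)) / (ω (i + 1) - ω i))) (uIcc (ω i) (ω (i + 1))) := by
      intro t ht
      rw [uIcc_of_le hab] at ht
      rw [hP i hi t ht]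
      field_simp
    rw [intervalIntegral.integral_congr heq,
      intervalIntegral.integral_add intervalIntegrable_const
        ((show Continuous fun t : ℝ => (t - ω i) * ((f (ω (i + 1)) - f (ω i)) / (ω (i + 1) - ω i)) from ((continuous_id'.sub continuous_const)).mul continuous_const).intervalIntegrable _ _),
      intervalIntegral.integral_const, intervalIntegral.integral_mul_const,
      intervalIntegral.integral_comp_sub_right (fun x => x) (ω i), integral_id, smul_eq_mul]
    field_simp
    ring
  -- interval integrability of P
  have hPi : ∀ i < N, IntervalIntegrable P volume (ω i) (ω (i + 1)) := by
    intro i hi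
    have hab := (hmono i hi).le
    rw [intervalIntegrable_iff_integrableOn_Ioc_of_le hab]
    have hg : IntegrableOn (fun t => f (ω i) + (t - ω i) / (ω (i + 1) - ω i) * (f (ω (i + 1)) - f (ω i))) (Ioc (ω i) (ω (i + 1))) := by
      exact (continuous_const.add (((continuous_id'.sub continuous_const).div_const _).mul
        continuous_const)).integrableOn_Ioc
    exact hg.congr_fun (fun t ht => (hP i hi t (Ioc_subset_Icc_self ht)).symm) measurableSet_Ioc
  -- per-interval error bound
  have hbound : ∀ i < N, |(∫ t in (ω i)..(ω (i + 1)), f t) - ∫ t in (ω i)..(ω (i + 1)), P t|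
      ≤ ϑ / (2 * ωbar) * (ω (i + 1) - ω i) := by
    intro i hi
    rw [hPval i hi]
    have htb := trap_bound (ω i) (ω (i + 1)) (L i) (hmono i hi).le (hL i) f
      (hf.mono (hsub i hi)) (hLip i hi)
    refine le_trans htb ?_
    have hΔ : (0:ℝ) < ω (i + 1) - ω i := by linarith [hmono i hi]
    have h1 := mul_le_mul_of_nonneg_right (hstep i hi) hΔ.le
    rw [div_mul_eq_mul_div, le_div_iff₀ (by positivity)]
    nlinarith
  -- integrability of P on [0, ωbar]
  have hPicc : ∀ n ≤ N, IntegrableOn P (Icc (ω 0) (ω n)) := by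
    intro n
    induction n with
    | zero =>
      intro _
      have h0 : volume.restrict (Icc (ω 0) (ω 0)) = 0 := by
        rw [Icc_self, Measure.restrict_eq_zero]
        exact measure_singleton _
      unfold IntegrableOn
      rw [h0]
      exact integrable_zero_measure
    | succ n ih =>
      intro hn
      rw [← Icc_union_Icc_eq_Icc (mono 0 n (Nat.zero_le _) (by omega)) (hmono n (by omega)).le]
      refine (ih (by omega)).union ?_
      have hg : IntegrableOn (fun t => f (ω n) + (t - ω n) / (ω (n + 1) - ω n) * (f (ω (n + 1)) - f (ω n))) (Icc (ω n) (ω (n + 1))) :=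
        (continuous_const.add (((continuous_id'.sub continuous_const).div_const _).mul
          continuous_const)).integrableOn_Icc
      exact hg.congr_fun (fun t ht => (hP n (by omega) t ht).symm) measurableSet_Icc
  have hPicc' : IntegrableOn P (Icc 0 ωbar) := by
    have := hPicc N le_rfl
    rwa [hω0, hωN] at this
  -- split Ici 0 integrals
  have hdisj : Disjoint (Icc (0:ℝ) ωbar) (Ioi ωbar) :=
    Set.disjoint_left.mpr fun x hx hx' => absurd hx.2 (not_le.mpr hx')
  have hunion : Icc (0:ℝ) ωbar ∪ Ioi ωbar = Ici 0 := Icc_union_Ioi_eq_Ici hωbar.le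
  have hfIcc : IntegrableOn f (Icc 0 ωbar) := hint.mono_set Icc_subset_Ici_self
  have hfIoi : IntegrableOn f (Ioi ωbar) :=
    hint.mono_set (fun x hx => le_trans hωbar.le (le_of_lt hx))
  have hPIoi : IntegrableOn P (Ioi ωbar) :=
    integrableOn_zero.congr_fun (fun t ht => (hP0 t ht).symm) measurableSet_Ioi
  have hsplitf : (∫ t in Ici (0:ℝ), f t) = (∫ t in Icc 0 ωbar, f t) + ∫ t in Ioi ωbar, f t := by
    rw [← hunion, setIntegral_union hdisj measurableSet_Ioi hfIcc hfIoi]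
  have hsplitP : (∫ t in Ici (0:ℝ), P t) = (∫ t in Icc 0 ωbar, P t) + ∫ t in Ioi ωbar, P t := by
    rw [← hunion, setIntegral_union hdisj measurableSet_Ioi hPicc' hPIoi]
  have hP0' : (∫ t in Ioi ωbar, P t) = 0 := by
    rw [setIntegral_congr_fun measurableSet_Ioi (fun t ht => hP0 t ht)]
    exact integral_zero _ _
  -- tail bound
  have htail' : |∫ t in Ioi ωbar, f t| ≤ ϑ / 2 := by
    have h1 : |∫ t in Ioi ωbar, f t| ≤ ∫ t in Ioi ωbar, |f t| := by
      simpa [Real.norm_eq_abs] using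
        norm_integral_le_integral_norm (μ := volume.restrict (Ioi ωbar)) f
    have h2 : (∫ t in Ioi ωbar, |f t|) = ∫ t in Ici ωbar, |f t| :=
      integral_Ici_eq_integral_Ioi.symm
    exact le_trans (h1.trans_eq h2) htail
  -- telescoping sums
  have hsumf : (∫ t in (ω 0)..(ω N), f t) = ∑ i ∈ Finset.range N, ∫ t in (ω i)..(ω (i + 1)), f t :=
    (intervalIntegral.sum_integral_adjacent_intervals hfi).symm
  have hsumP : (∫ t in (ω 0)..(ω N), P t) = ∑ i ∈ Finset.range N, ∫ t in (ω i)..(ω (i + 1)), P t :=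
    (intervalIntegral.sum_integral_adjacent_intervals hPi).symm
  have hIccf : (∫ t in Icc (0:ℝ) ωbar, f t) = ∫ t in (ω 0)..(ω N), f t := by
    rw [hω0, hωN, intervalIntegral.integral_of_le hωbar.le, integral_Icc_eq_integral_Ioc]
  have hIccP : (∫ t in Icc (0:ℝ) ωbar, P t) = ∫ t in (ω 0)..(ω N), P t := by
    rw [hω0, hωN, intervalIntegral.integral_of_le hωbar.le, integral_Icc_eq_integral_Ioc]
  -- main estimate
  have hmid : |(∫ t in Icc (0:ℝ) ωbar, f t) - ∫ t in Icc (0:ℝ) ωbar, P t| ≤ ϑ / 2 := by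
    rw [hIccf, hIccP, hsumf, hsumP, ← Finset.sum_sub_distrib]
    calc |∑ i ∈ Finset.range N, ((∫ t in (ω i)..(ω (i + 1)), f t) - ∫ t in (ω i)..(ω (i + 1)), P t)|
        ≤ ∑ i ∈ Finset.range N, |(∫ t in (ω i)..(ω (i + 1)), f t) - ∫ t in (ω i)..(ω (i + 1)), P t| :=
          Finset.abs_sum_le_sum_abs _ _
      _ ≤ ∑ i ∈ Finset.range N, ϑ / (2 * ωbar) * (ω (i + 1) - ω i) :=
          Finset.sum_le_sum (fun i hi => hbound i (Finset.mem_range.mp hi))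
      _ = ϑ / (2 * ωbar) * ∑ i ∈ Finset.range N, (ω (i + 1) - ω i) := by
          rw [Finset.mul_sum]
      _ = ϑ / (2 * ωbar) * ωbar := by
          rw [Finset.sum_range_sub (fun i => ω i), hω0, hωN]; ring_nf
      _ = ϑ / 2 := by field_simp
  calc |(∫ t in Ici (0:ℝ), f t) - ∫ t in Ici (0:ℝ), P t|
      = |((∫ t in Icc (0:ℝ) ωbar, f t) - ∫ t in Icc (0:ℝ) ωbar, P t) + ∫ t in Ioi ωbar, f t| := by
        rw [hsplitf, hsplitP, hP0']; ring_nf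
    _ ≤ |(∫ t in Icc (0:ℝ) ωbar, f t) - ∫ t in Icc (0:ℝ) ωbar, P t| + |∫ t in Ioi ωbar, f t| :=
        abs_add_le _ _
    _ ≤ ϑ / 2 + ϑ / 2 := add_le_add hmid htail'
    _ = ϑ := by ring
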